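/- If functions X_2, X_3, X_4 satisfy Halphen's system (X_2+X_3)' = 2X_2X_3, (X_3+X_4)' = 2X_3X_4, (X_4+X_2)' = 2X_4X_2 on a domain, then f := -(1/6)(X_2 + X_3 + X_4) satisfies f''' = -24 f f'' + 36 (f')². -/

import Mathlib

/-- If `X₂, X₃, X₄` satisfy Halphen's system on an open domain `U`, then
`f := -(1/6)(X₂ + X₃ + X₄)` satisfies `f''' = -24 f f'' + 36 (f')²` on `U`. -/
theorem wdvv_of_halphen (U : Set ℂ) (hU : IsOpen U) (X₂ X₃ X₄ : ℂ → ℂ)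
    (h2 : AnalyticOnNhd ℂ X₂ U) (h3 : AnalyticOnNhd ℂ X₃ U) (h4 : AnalyticOnNhd ℂ X₄ U)
    (hal1 : ∀ t ∈ U, deriv (fun s => X₂ s + X₃ s) t = 2 * X₂ t * X₃ t)
    (hal2 : ∀ t ∈ U, deriv (fun s => X₃ s + X₄ s) t = 2 * X₃ t * X₄ t)
    (hal3 : ∀ t ∈ U, deriv (fun s => X₄ s + X₂ s) t = 2 * X₄ t * X₂ t) :
    ∀ t ∈ U, iteratedDeriv 3 (fun s => -(1 / 6) * (X₂ s + X₃ s + X₄ s)) t =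
      -24 * ((fun s => -(1 / 6) * (X₂ s + X₃ s + X₄ s)) t)
          * iteratedDeriv 2 (fun s => -(1 / 6) * (X₂ s + X₃ s + X₄ s)) t
        + 36 * (deriv (fun s => -(1 / 6) * (X₂ s + X₃ s + X₄ s)) t) ^ 2 := by
  set g : ℂ → ℂ := fun s => X₂ s + X₃ s + X₄ s with hgdef
  set f : ℂ → ℂ := fun s => -(1 / 6) * (X₂ s + X₃ s + X₄ s) with hfdef
  have d2 : ∀ s ∈ U, DifferentiableAt ℂ X₂ s := fun s hs => (h2 s hs).differentiableAt
  have d3 : ∀ s ∈ U, DifferentiableAt ℂ X₃ s := fun s hs => (h3 s hs).differentiableAt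
  have d4 : ∀ s ∈ U, DifferentiableAt ℂ X₄ s := fun s hs => (h4 s hs).differentiableAt
  -- individual derivatives on U
  have hd2 : ∀ s ∈ U, deriv X₂ s = X₂ s * X₃ s + X₂ s * X₄ s - X₃ s * X₄ s := by
    intro s hs
    have e1 := hal1 s hs; have e2 := hal2 s hs; have e3 := hal3 s hs
    rw [deriv_fun_add (d2 s hs) (d3 s hs)] at e1
    rw [deriv_fun_add (d3 s hs) (d4 s hs)] at e2
    rw [deriv_fun_add (d4 s hs) (d2 s hs)] at e3
    linear_combination e1 / 2 - e2 / 2 + e3 / 2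
  have hd3 : ∀ s ∈ U, deriv X₃ s = X₂ s * X₃ s + X₃ s * X₄ s - X₂ s * X₄ s := by
    intro s hs
    have e1 := hal1 s hs; have e2 := hal2 s hs; have e3 := hal3 s hs
    rw [deriv_fun_add (d2 s hs) (d3 s hs)] at e1
    rw [deriv_fun_add (d3 s hs) (d4 s hs)] at e2
    rw [deriv_fun_add (d4 s hs) (d2 s hs)] at e3
    linear_combination e1 / 2 + e2 / 2 - e3 / 2
  have hd4 : ∀ s ∈ U, deriv X₄ s = X₂ s * X₄ s + X₃ s * X₄ s - X₂ s * X₃ s := by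
    intro s hs
    have e1 := hal1 s hs; have e2 := hal2 s hs; have e3 := hal3 s hs
    rw [deriv_fun_add (d2 s hs) (d3 s hs)] at e1
    rw [deriv_fun_add (d3 s hs) (d4 s hs)] at e2
    rw [deriv_fun_add (d4 s hs) (d2 s hs)] at e3
    linear_combination -e1 / 2 + e2 / 2 + e3 / 2
  -- first derivative of f on U
  have hdg : ∀ s ∈ U, DifferentiableAt ℂ g s := fun s hs =>
    (((d2 s hs).add (d3 s hs)).add (d4 s hs))
  have hf1 : ∀ s ∈ U, deriv f s =
      -(1 / 6) * (X₂ s * X₃ s + X₃ s * X₄ s + X₂ s * X₄ s) := by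
    intro s hs
    rw [hfdef]
    rw [deriv_const_mul _ (hdg s hs)]
    rw [hgdef]
    rw [deriv_fun_add ((d2 s hs).fun_add (d3 s hs)) (d4 s hs),
      deriv_fun_add (d2 s hs) (d3 s hs), hd2 s hs, hd3 s hs, hd4 s hs]
    ring
  -- second derivative of f on U
  have hf2 : ∀ s ∈ U, deriv (deriv f) s = -(X₂ s * X₃ s * X₄ s) := by
    intro s hs
    have heq : deriv f =ᶠ[nhds s]
        (fun x => -(1 / 6) * (X₂ x * X₃ x + X₃ x * X₄ x + X₂ x * X₄ x)) :=
      Filter.eventuallyEq_of_mem (hU.mem_nhds hs) hf1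
    rw [heq.deriv_eq]
    have dA : DifferentiableAt ℂ (fun x => X₂ x * X₃ x + X₃ x * X₄ x + X₂ x * X₄ x) s :=
      (((d2 s hs).mul (d3 s hs)).add ((d3 s hs).mul (d4 s hs))).add
        ((d2 s hs).mul (d4 s hs))
    rw [deriv_const_mul _ dA]
    rw [deriv_fun_add (((d2 s hs).fun_mul (d3 s hs)).fun_add ((d3 s hs).fun_mul (d4 s hs)))
      ((d2 s hs).fun_mul (d4 s hs)),
      deriv_fun_add ((d2 s hs).fun_mul (d3 s hs)) ((d3 s hs).fun_mul (d4 s hs)),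
      deriv_fun_mul (d2 s hs) (d3 s hs), deriv_fun_mul (d3 s hs) (d4 s hs),
      deriv_fun_mul (d2 s hs) (d4 s hs), hd2 s hs, hd3 s hs, hd4 s hs]
    ring
  -- third derivative of f at t
  intro t ht
  have hf3 : deriv (deriv (deriv f)) t =
      -((X₂ t * X₃ t + X₂ t * X₄ t - X₃ t * X₄ t) * X₃ t * X₄ t
        + X₂ t * (X₂ t * X₃ t + X₃ t * X₄ t - X₂ t * X₄ t) * X₄ t
        + X₂ t * X₃ t * (X₂ t * X₄ t + X₃ t * X₄ t - X₂ t * X₃ t)) := by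
    have heq : deriv (deriv f) =ᶠ[nhds t] (fun x => -(X₂ x * X₃ x * X₄ x)) :=
      Filter.eventuallyEq_of_mem (hU.mem_nhds ht) hf2
    rw [heq.deriv_eq]
    rw [deriv.fun_neg]
    rw [deriv_fun_mul ((d2 t ht).fun_mul (d3 t ht)) (d4 t ht),
      deriv_fun_mul (d2 t ht) (d3 t ht), hd2 t ht, hd3 t ht, hd4 t ht]
    ring
  rw [show (3 : ℕ) = 2 + 1 from rfl, iteratedDeriv_succ,
    show (2 : ℕ) = 1 + 1 from rfl, iteratedDeriv_succ, iteratedDeriv_one]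
  rw [hf3, hf2 t ht, hf1 t ht]
  ring
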